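/- Two flat cone metrics on a compact Riemann surface with the same finite cone points and the same (finite) cone angles differ by a constant positive scalar factor. -/

import Mathlib

open scoped Manifold

variable {M : Type*} [TopologicalSpace M] [ChartedSpace ℂ M]

/-- A family `ρ`, assigning to each point `x` of a Riemann surface the density of a
conformal metric in the coordinates of the chart at `x`, is compatible if on chart
overlaps the densities transform by the modulus of the derivative of the transition map. -/
def MetricCompat (ρ : M → ℂ → ℝ) : Prop :=
  ∀ x y m : M, m ∈ (chartAt ℂ x).source → m ∈ (chartAt ℂ y).source →
    ρ x (chartAt ℂ x m) =
      ρ y (chartAt ℂ y m) *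
        ‖deriv (fun w => chartAt ℂ y ((chartAt ℂ x).symm w)) (chartAt ℂ x m)‖

/-- The metric with density family `ρ` is flat away from the set `P`: near every
point not in `P` it is, in the chart coordinates, of the form `|f(z)||dz|` with `f`
holomorphic and nonvanishing (so `log |f|` is harmonic and the Gauss curvature vanishes). -/
def FlatAwayFrom (ρ : M → ℂ → ℝ) (P : Set M) : Prop :=
  ∀ x : M, x ∉ P → ∃ r > 0, Metric.ball (chartAt ℂ x x) r ⊆ (chartAt ℂ x).target ∧
    ∃ f : ℂ → ℂ, DifferentiableOn ℂ f (Metric.ball (chartAt ℂ x x) r) ∧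
      ∀ z ∈ Metric.ball (chartAt ℂ x x) r, f z ≠ 0 ∧ ρ x z = ‖f z‖

/-- The metric with density family `ρ` has a (finite) cone point of cone angle `2πa`
at `p`: in a suitable holomorphic local coordinate `w` centered at `p`, the metric is
`|w^(a-1) dw|`, i.e. it is isometric to a neighborhood of the vertex of the cone `C_a`. -/
def FiniteConeAt (ρ : M → ℂ → ℝ) (p : M) (a : ℝ) : Prop :=
  ∃ r > 0, Metric.ball (chartAt ℂ p p) r ⊆ (chartAt ℂ p).target ∧
    ∃ w : ℂ → ℂ, DifferentiableOn ℂ w (Metric.ball (chartAt ℂ p p) r) ∧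
      Set.InjOn w (Metric.ball (chartAt ℂ p p) r) ∧
      w (chartAt ℂ p p) = 0 ∧
      ∀ z ∈ Metric.ball (chartAt ℂ p p) r, z ≠ chartAt ℂ p p →
        ρ p z = ‖w z‖ ^ (a - 1) * ‖deriv w z‖

/-- The metric with density family `ρ` has an exponential cone point of simple type
at `p`: in a suitable holomorphic local coordinate `w` centered at `p`, the metric is
`|e^(1/w) dw / w²|`. -/
def ExpConeAt (ρ : M → ℂ → ℝ) (p : M) : Prop :=
  ∃ r > 0, Metric.ball (chartAt ℂ p p) r ⊆ (chartAt ℂ p).target ∧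
    ∃ w : ℂ → ℂ, DifferentiableOn ℂ w (Metric.ball (chartAt ℂ p p) r) ∧
      Set.InjOn w (Metric.ball (chartAt ℂ p p) r) ∧
      w (chartAt ℂ p p) = 0 ∧
      ∀ z ∈ Metric.ball (chartAt ℂ p p) r, z ≠ chartAt ℂ p p →
        ρ p z = ‖Complex.exp (1 / w z)‖ * ‖deriv w z‖ / ‖w z‖ ^ 2

/-- A global holomorphic one-form on a Riemann surface, given by its coefficient
functions in the charts, holomorphic and transforming by the derivative of the
transition maps. -/
def IsHoloOneForm (M : Type*) [TopologicalSpace M] [ChartedSpace ℂ M]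
    (η : M → ℂ → ℂ) : Prop :=
  (∀ x : M, DifferentiableOn ℂ (η x) (chartAt ℂ x).target) ∧
  ∀ x y m : M, m ∈ (chartAt ℂ x).source → m ∈ (chartAt ℂ y).source →
    η x (chartAt ℂ x m) =
      η y (chartAt ℂ y m) *
        deriv (fun w => chartAt ℂ y ((chartAt ℂ x).symm w)) (chartAt ℂ x m)

/-- A compact Riemann surface has genus `g` iff the space of global holomorphic
one-forms has complex dimension `g`. -/
def HasGenus (M : Type*) [TopologicalSpace M] [ChartedSpace ℂ M] (g : ℕ) : Prop :=
  ∃ V : Submodule ℂ (M → ℂ → ℂ),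
    (V : Set (M → ℂ → ℂ)) = {η | IsHoloOneForm M η} ∧ Module.finrank ℂ V = g


section FlatConeAux

open Complex Metric Filter Set Topology

theorem deriv_ne_zero_of_injOn {s : Set ℂ} (hs : IsOpen s) {w : ℂ → ℂ}
    (hw : DifferentiableOn ℂ w s) (hinj : Set.InjOn w s) {z₀ : ℂ} (hz₀ : z₀ ∈ s) :
    deriv w z₀ ≠ 0 := by
  intro hd0
  have hwa : AnalyticOnNhd ℂ w s := hw.analyticOnNhd hs
  have hga : AnalyticAt ℂ (fun z => w z - w z₀) z₀ := (hwa z₀ hz₀).sub analyticAt_const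
  -- order is not ⊤
  have hnt : analyticOrderAt (fun z => w z - w z₀) z₀ ≠ ⊤ := by
    intro ht
    rw [analyticOrderAt_eq_top] at ht
    have h1 : ∀ᶠ z in 𝓝[≠] z₀, w z - w z₀ = 0 ∧ z ∈ s :=
      (ht.and (hs.eventually_mem hz₀)).filter_mono nhdsWithin_le_nhds
    obtain ⟨z, ⟨hz1, hz2⟩, hz3⟩ := (h1.and self_mem_nhdsWithin).exists
    exact hz3 (hinj hz2 hz₀ (sub_eq_zero.mp hz1))
  obtain ⟨n, hn⟩ := WithTop.ne_top_iff_exists.mp hnt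
  obtain ⟨φ, hφa, hφ0, hφeq⟩ := (hga.analyticOrderAt_eq_natCast (n := n)).mp hn.symm
  -- n ≠ 0
  have hn0 : n ≠ 0 := by
    intro h
    subst h
    have := hφeq.self_of_nhds
    simp at this
    exact hφ0 (by rw [← this])
  -- n ≠ 1
  have hn1 : n ≠ 1 := by
    intro h
    subst h
    have hder : HasDerivAt (fun z => (z - z₀) ^ 1 • φ z) ((1 - 0) * φ z₀ + (z₀ - z₀) * deriv φ z₀) z₀ := by
      simpa using (((hasDerivAt_id z₀).sub_const (z₀)).fun_mul hφa.differentiableAt.hasDerivAt)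
    have : deriv (fun z => w z - w z₀) z₀ = φ z₀ := by
      rw [Filter.EventuallyEq.deriv_eq hφeq]
      simpa using hder.deriv
    rw [deriv_sub_const] at this
    rw [hd0] at this
    exact hφ0 this.symm
  have hn2 : 2 ≤ n := by omega
  -- construct an n-th root of φ near z₀
  obtain ⟨c, hc⟩ : ∃ c : ℂ, c ^ n = φ z₀ := ⟨φ z₀ ^ ((n : ℂ)⁻¹), Complex.cpow_nat_inv_pow _ hn0⟩
  have hc0 : c ≠ 0 := fun h => hφ0 (by rw [← hc, h, zero_pow hn0])
  set ψ : ℂ → ℂ := fun z => c * Complex.exp (Complex.log (φ z / φ z₀) / n) with hψ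
  have hψa : AnalyticAt ℂ ψ z₀ := by
    apply analyticAt_const.mul
    apply AnalyticAt.cexp
    apply AnalyticAt.div _ analyticAt_const (by norm_num [Nat.cast_ne_zero, hn0])
    exact (analyticAt_clog (by simp [div_self hφ0, Complex.one_mem_slitPlane])).comp
      (hφa.div analyticAt_const hφ0)
  have hψ0 : ψ z₀ = c := by simp [hψ, div_self hφ0]
  have hev : ∀ᶠ z in 𝓝 z₀, ψ z ^ n = φ z := by
    filter_upwards [hφa.continuousAt.eventually_ne hφ0] with z hz
    have h1 : φ z / φ z₀ ≠ 0 := div_ne_zero hz hφ0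
    have hnC : (n : ℂ) ≠ 0 := Nat.cast_ne_zero.mpr hn0
    calc ψ z ^ n = c ^ n * Complex.exp ((n : ℂ) * (Complex.log (φ z / φ z₀) / n)) := by
          rw [mul_pow, ← Complex.exp_nat_mul]
      _ = φ z₀ * (φ z / φ z₀) := by rw [hc, mul_div_cancel₀ _ hnC, Complex.exp_log h1]
      _ = φ z := mul_div_cancel₀ _ hφ0
  set F : ℂ → ℂ := fun z => (z - z₀) * ψ z with hF
  have hFev : ∀ᶠ z in 𝓝 z₀, w z = w z₀ + F z ^ n := by
    filter_upwards [hφeq, hev] with z h1 h2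
    rw [hF]
    simp only [mul_pow, h2]
    rw [smul_eq_mul] at h1
    linear_combination h1
  have hFa : AnalyticAt ℂ F z₀ := (analyticAt_id.sub analyticAt_const).mul hψa
  have hFder : HasDerivAt F c z₀ := by
    have := (((hasDerivAt_id z₀).sub_const z₀).fun_mul hψa.differentiableAt.hasDerivAt)
    simpa [hψ0] using this
  obtain ⟨p, hp⟩ := hFa
  have hsd : HasStrictDerivAt F c z₀ := by
    have h1 := hp.hasStrictDerivAt
    rwa [h1.hasDerivAt.unique hFder] at h1
  have hmap : Filter.map F (𝓝 z₀) = 𝓝 0 := by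
    have := hsd.map_nhds_eq hc0
    rwa [show F z₀ = 0 by simp [hF]] at this
  obtain ⟨t, ht, htp⟩ := Filter.eventually_iff_exists_mem.mp
    (hFev.and (hs.eventually_mem hz₀))
  have himg : F '' t ∈ 𝓝 (0 : ℂ) := hmap ▸ Filter.image_mem_map ht
  obtain ⟨ε, hε, hball⟩ := Metric.mem_nhds_iff.mp himg
  set v : ℂ := ((ε / 2 : ℝ) : ℂ) with hv
  have hvn : ‖v‖ = ε / 2 := by
    rw [hv, Complex.norm_real, Real.norm_eq_abs, abs_of_pos (by linarith)]
  have hv0 : v ≠ 0 := by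
    intro h; rw [h, norm_zero] at hvn; linarith
  set ζ : ℂ := Complex.exp (2 * Real.pi * Complex.I / n) with hζ
  have hprim : IsPrimitiveRoot ζ n := Complex.isPrimitiveRoot_exp n hn0
  have hζn : ζ ^ n = 1 := hprim.pow_eq_one
  have hζ1 : ζ ≠ 1 := hprim.ne_one (by omega)
  have hζabs : ‖ζ‖ = 1 := by
    rw [hζ, show 2 * Real.pi * Complex.I / n = ((2 * Real.pi / n : ℝ) : ℂ) * Complex.I by
      push_cast; ring]
    exact Complex.norm_exp_ofReal_mul_I _
  obtain ⟨z₁, hz₁t, hFz₁⟩ : v ∈ F '' t := hball (by simp [Metric.mem_ball, hvn]; linarith)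
  obtain ⟨z₂, hz₂t, hFz₂⟩ : ζ * v ∈ F '' t := by
    apply hball
    simp only [Metric.mem_ball, dist_zero_right, norm_mul, hζabs, one_mul, hvn]
    linarith
  have hw1 := (htp z₁ hz₁t).1
  have hw2 := (htp z₂ hz₂t).1
  have hwz : w z₁ = w z₂ := by
    rw [hw1, hw2, hFz₁, hFz₂, mul_pow, hζn, one_mul]
  have h12 : z₁ = z₂ := hinj (htp z₁ hz₁t).2 (htp z₂ hz₂t).2 hwz
  rw [h12, hFz₂] at hFz₁
  have : (ζ - 1) * v = 0 := by linear_combination hFz₁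
  rcases mul_eq_zero.mp this with h | h
  · exact hζ1 (by linear_combination h)
  · exact hv0 h

variable {M : Type*} [TopologicalSpace M] [ChartedSpace ℂ M]

theorem rho_pos {ρ : M → ℂ → ℝ} {P : Set M} (hflat : FlatAwayFrom ρ P) {m : M}
    (hm : m ∉ P) : 0 < ρ m (chartAt ℂ m m) := by
  obtain ⟨r, hr, -, f, -, hf⟩ := hflat m hm
  obtain ⟨h1, h2⟩ := hf _ (Metric.mem_ball_self hr)
  rw [h2]
  exact norm_pos_iff.mpr h1

theorem transfer {ρ₁ ρ₂ : M → ℂ → ℝ} (hc₁ : MetricCompat ρ₁) (hc₂ : MetricCompat ρ₂)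
    {x m : M} (hx : m ∈ (chartAt ℂ x).source) {t : ℝ}
    (h : ρ₂ x (chartAt ℂ x m) = t * ρ₁ x (chartAt ℂ x m)) :
    ρ₂ m (chartAt ℂ m m) = t * ρ₁ m (chartAt ℂ m m) := by
  rw [hc₁ m x m (mem_chart_source ℂ m) hx, hc₂ m x m (mem_chart_source ℂ m) hx, h]
  ring

theorem rho_x_pos {ρ₁ : M → ℂ → ℝ} {P : Set M} (hc₁ : MetricCompat ρ₁)
    (hflat₁ : FlatAwayFrom ρ₁ P) {x m : M} (hx : m ∈ (chartAt ℂ x).source)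
    (hm : m ∉ P) : 0 < ρ₁ x (chartAt ℂ x m) := by
  have h1 := hc₁ m x m (mem_chart_source ℂ m) hx
  have h2 := rho_pos hflat₁ hm
  rw [h1] at h2
  nlinarith [norm_nonneg (deriv (fun w => chartAt ℂ x ((chartAt ℂ m).symm w)) (chartAt ℂ m m))]

theorem exists_not_mem_of_mem_nhds [T2Space M] (P : Finset M) {m : M} {V : Set M}
    (hV : V ∈ 𝓝 m) : ∃ m' ∈ V, m' ∉ (P : Set M) := by
  set e := chartAt ℂ m with he
  have hms : m ∈ e.source := mem_chart_source ℂ m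
  have hmt : e m ∈ e.target := e.map_source hms
  have hA : e.target ∩ e.symm ⁻¹' V ∈ 𝓝 (e m) := by
    refine Filter.inter_mem (e.open_target.mem_nhds hmt) ?_
    refine (e.continuousAt_symm hmt).preimage_mem_nhds ?_
    rwa [e.left_inv hms]
  obtain ⟨δ, hδ, hball⟩ := Metric.mem_nhds_iff.mp hA
  have hBfin : (e.target ∩ e.symm ⁻¹' (P : Set M)).Finite := by
    refine Set.Finite.subset (((P.finite_toSet.inter_of_left e.source).image e)) ?_
    rintro z ⟨hzt, hzP⟩
    exact ⟨e.symm z, ⟨hzP, e.map_target hzt⟩, e.right_inv hzt⟩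
  have hinj : Function.Injective (fun t : ℝ => e m + (t : ℂ)) := by
    intro s t hst
    simpa using hst
  have himg : ((fun t : ℝ => e m + (t : ℂ)) '' Set.Ioo 0 δ).Infinite :=
    (Set.Ioo_infinite (by linarith)).image hinj.injOn
  obtain ⟨z, hz1, hz2⟩ := (himg.diff hBfin).nonempty
  have hzball : z ∈ ball (e m) δ := by
    obtain ⟨t, ht, rfl⟩ := hz1
    simp only [mem_ball, dist_self_add_left, Complex.norm_real, Real.norm_eq_abs]
    rw [abs_of_pos ht.1]
    exact ht.2
  have hzA := hball hzball
  refine ⟨e.symm z, hzA.2, fun hP => hz2 ⟨hzA.1, hP⟩⟩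

theorem dslope_diffOn {w : ℂ → ℂ} {z₀ : ℂ} {r R : ℝ} (hR : 0 < R)
    (hdiff : DifferentiableOn ℂ w (ball z₀ R)) (hsub : ball z₀ r ⊆ ball z₀ R) :
    DifferentiableOn ℂ (dslope w z₀) (ball z₀ r) := by
  intro z hz
  rcases eq_or_ne z z₀ with rfl | hne
  · obtain ⟨p, hp⟩ := (hdiff.analyticOnNhd isOpen_ball) z (mem_ball_self hR)
    have ha : AnalyticAt ℂ (dslope w z) z := ⟨_, hp.has_fpower_series_dslope_fslope⟩
    exact ha.differentiableAt.differentiableWithinAt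
  · exact (differentiableWithinAt_dslope_of_ne hne).mpr
      ((hdiff.mono hsub) z hz)

theorem localRep [T2Space M] (P : Finset M) (a : M → ℝ) (ρ₁ ρ₂ : M → ℂ → ℝ)
    (hc₁ : MetricCompat ρ₁)
    (hflat₁ : FlatAwayFrom ρ₁ (P : Set M)) (hflat₂ : FlatAwayFrom ρ₂ (P : Set M))
    (hcone₁ : ∀ p ∈ P, FiniteConeAt ρ₁ p (a p))
    (hcone₂ : ∀ p ∈ P, FiniteConeAt ρ₂ p (a p)) (x : M) :
    ∃ r > 0, Metric.ball (chartAt ℂ x x) r ⊆ (chartAt ℂ x).target ∧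
      ∃ h : ℂ → ℂ, DifferentiableOn ℂ h (Metric.ball (chartAt ℂ x x) r) ∧
        ∀ z ∈ Metric.ball (chartAt ℂ x x) r, (chartAt ℂ x).symm z ∉ (P : Set M) →
          ρ₂ x z = ‖h z‖ * ρ₁ x z := by
  classical
  by_cases hx : x ∈ (P : Set M)
  · -- cone case
    set e := chartAt ℂ x with he
    set z₀ := e x with hz₀def
    obtain ⟨r₁, hr₁, ht₁, w₁, hd₁, hinj₁, hw₁0, hρ₁⟩ := hcone₁ x hx
    obtain ⟨r₂, hr₂, ht₂, w₂, hd₂, hinj₂, hw₂0, hρ₂⟩ := hcone₂ x hx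
    have hd1ne0 : deriv w₁ z₀ ≠ 0 :=
      deriv_ne_zero_of_injOn isOpen_ball hd₁ hinj₁ (mem_ball_self hr₁)
    have hd2ne0 : deriv w₂ z₀ ≠ 0 :=
      deriv_ne_zero_of_injOn isOpen_ball hd₂ hinj₂ (mem_ball_self hr₂)
    set q : ℂ → ℂ := fun z => dslope w₂ z₀ z / dslope w₁ z₀ z with hq
    have hq0 : q z₀ ≠ 0 := by
      rw [hq]
      simp only [dslope_same]
      exact div_ne_zero hd2ne0 hd1ne0
    -- continuity of q at z₀
    have hqa1 : AnalyticAt ℂ (dslope w₁ z₀) z₀ := by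
      obtain ⟨p, hp⟩ := (hd₁.analyticOnNhd isOpen_ball) z₀ (mem_ball_self hr₁)
      exact ⟨_, hp.has_fpower_series_dslope_fslope⟩
    have hqa2 : AnalyticAt ℂ (dslope w₂ z₀) z₀ := by
      obtain ⟨p, hp⟩ := (hd₂.analyticOnNhd isOpen_ball) z₀ (mem_ball_self hr₂)
      exact ⟨_, hp.has_fpower_series_dslope_fslope⟩
    have hqc : ContinuousAt q z₀ := by
      refine ContinuousAt.div hqa2.continuousAt hqa1.continuousAt ?_
      rw [dslope_same]; exact hd1ne0
    -- the neighborhood conditions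
    have hev : ∀ᶠ z in 𝓝 z₀, (z ∈ ball z₀ r₁ ∧ z ∈ ball z₀ r₂) ∧
        ((e.symm z ∈ e.source ∧ e.symm z ∉ ((P.erase x : Finset M) : Set M))) ∧
        q z / q z₀ ∈ Complex.slitPlane := by
      have h1 : ∀ᶠ z in 𝓝 z₀, z ∈ ball z₀ r₁ := isOpen_ball.eventually_mem (mem_ball_self hr₁)
      have h2 : ∀ᶠ z in 𝓝 z₀, z ∈ ball z₀ r₂ := isOpen_ball.eventually_mem (mem_ball_self hr₂)
      have h3 : ∀ᶠ z in 𝓝 z₀, e.symm z ∈ e.source \ ((P.erase x : Finset M) : Set M) := by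
        have hO : IsOpen (e.source \ ((P.erase x : Finset M) : Set M)) :=
          e.open_source.sdiff (P.erase x).finite_toSet.isClosed
        have hxO : x ∈ e.source \ ((P.erase x : Finset M) : Set M) := by
          refine ⟨mem_chart_source ℂ x, ?_⟩
          simp
        have hmt : z₀ ∈ e.target := e.map_source (mem_chart_source ℂ x)
        have := (e.continuousAt_symm hmt).preimage_mem_nhds
          (hO.mem_nhds (by rwa [e.left_inv (mem_chart_source ℂ x)]))
        exact this
      have h4 : ∀ᶠ z in 𝓝 z₀, q z / q z₀ ∈ Complex.slitPlane := by
        have : Tendsto (fun z => q z / q z₀) (𝓝 z₀) (𝓝 (q z₀ / q z₀)) :=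
          hqc.div continuousAt_const hq0
        rw [div_self hq0] at this
        exact this.eventually (Complex.isOpen_slitPlane.eventually_mem Complex.one_mem_slitPlane)
      filter_upwards [h1, h2, h3, h4] with z hz1 hz2 hz3 hz4
      exact ⟨⟨hz1, hz2⟩, ⟨hz3.1, hz3.2⟩, hz4⟩
    obtain ⟨r, hr, hrball⟩ := Metric.eventually_nhds_iff_ball.mp hev
    have hsub₁ : ball z₀ r ⊆ ball z₀ r₁ := fun z hz => (hrball z hz).1.1
    have hsub₂ : ball z₀ r ⊆ ball z₀ r₂ := fun z hz => (hrball z hz).1.2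
    -- key facts about points in the ball
    have hnotP : ∀ z ∈ ball z₀ r, z ≠ z₀ → e.symm z ∉ (P : Set M) := by
      intro z hz hne hP
      have h1 := (hrball z hz).2.1
      have hne' : e.symm z ≠ x := by
        intro hh
        apply hne
        have : e (e.symm z) = e x := by rw [hh]
        rwa [e.right_inv (ht₁ (hsub₁ hz))] at this
      exact h1.2 (by simpa [Finset.mem_erase, hne'] using hP)
    have hw₁ne : ∀ z ∈ ball z₀ r, z ≠ z₀ → w₁ z ≠ 0 := by
      intro z hz hne h0
      exact hne (hinj₁ (hsub₁ hz) (mem_ball_self hr₁) (by rw [h0, hw₁0]))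
    have hw₂ne : ∀ z ∈ ball z₀ r, z ≠ z₀ → w₂ z ≠ 0 := by
      intro z hz hne h0
      exact hne (hinj₂ (hsub₂ hz) (mem_ball_self hr₂) (by rw [h0, hw₂0]))
    -- ρ₁ x z > 0 for z ≠ z₀ in ball
    have hρ₁pos : ∀ z ∈ ball z₀ r, z ≠ z₀ → 0 < ρ₁ x z := by
      intro z hz hne
      have hzt : z ∈ e.target := ht₁ (hsub₁ hz)
      have hsrc : e.symm z ∈ e.source := e.map_target hzt
      have := rho_x_pos hc₁ hflat₁ hsrc (hnotP z hz hne)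
      rwa [e.right_inv hzt] at this
    have hder₁ne : ∀ z ∈ ball z₀ r, deriv w₁ z ≠ 0 := by
      intro z hz
      rcases eq_or_ne z z₀ with rfl | hne
      · exact hd1ne0
      · intro h0
        have := hρ₁pos z hz hne
        rw [hρ₁ z (hsub₁ hz) hne, h0] at this
        simp at this
    have hdslope₁ne : ∀ z ∈ ball z₀ r, dslope w₁ z₀ z ≠ 0 := by
      intro z hz
      rcases eq_or_ne z z₀ with rfl | hne
      · rw [dslope_same]; exact hd1ne0
      · rw [dslope_of_ne _ hne, slope_def_field, hw₁0]
        simp only [sub_zero]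
        exact div_ne_zero (hw₁ne z hz hne) (sub_ne_zero.mpr hne)
    -- differentiability pieces
    have hqdiff : DifferentiableOn ℂ q (ball z₀ r) := by
      exact DifferentiableOn.div (dslope_diffOn hr₂ hd₂ hsub₂) (dslope_diffOn hr₁ hd₁ hsub₁)
        hdslope₁ne
    set s : ℝ := a x - 1 with hs
    refine ⟨r, hr, fun z hz => ht₁ (hsub₁ hz),
      fun z => (q z / q z₀) ^ ((s : ℝ) : ℂ) * (deriv w₂ z / deriv w₁ z) *
        ((‖q z₀‖ ^ s : ℝ) : ℂ), ?_, ?_⟩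
    · have hcp : DifferentiableOn ℂ (fun z => (q z / q z₀) ^ ((s : ℝ) : ℂ)) (ball z₀ r) := by
        apply DifferentiableOn.cpow (hqdiff.div_const _) (differentiableOn_const _)
        intro z hz
        exact (hrball z hz).2.2
      have hder2 : DifferentiableOn ℂ (deriv w₂) (ball z₀ r) :=
        (((hd₂.analyticOnNhd isOpen_ball).deriv).differentiableOn).mono hsub₂
      have hder1 : DifferentiableOn ℂ (deriv w₁) (ball z₀ r) :=
        (((hd₁.analyticOnNhd isOpen_ball).deriv).differentiableOn).mono hsub₁
      exact (hcp.mul (hder2.div hder1 hder₁ne)).mul (differentiableOn_const _)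
    · intro z hz hzP
      have hne : z ≠ z₀ := by
        rintro rfl
        exact hzP (by rw [hz₀def, e.left_inv (mem_chart_source ℂ x)]; exact hx)
      have hw1pos : 0 < ‖w₁ z‖ := norm_pos_iff.mpr (hw₁ne z hz hne)
      have hw2pos : 0 < ‖w₂ z‖ := norm_pos_iff.mpr (hw₂ne z hz hne)
      have hder1pos : 0 < ‖deriv w₁ z‖ := norm_pos_iff.mpr (hder₁ne z hz)
      have hq0pos : 0 < ‖q z₀‖ := norm_pos_iff.mpr hq0
      have hw₁0' : w₁ z₀ = 0 := hw₁0
      have hw₂0' : w₂ z₀ = 0 := hw₂0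
      have hzz : z - z₀ ≠ 0 := sub_ne_zero.mpr hne
      have hqz : q z = w₂ z / w₁ z := by
        rw [hq]
        simp only
        rw [dslope_of_ne _ hne, dslope_of_ne _ hne, slope_def_field, slope_def_field,
          hw₁0', hw₂0', sub_zero, sub_zero]
        field_simp
      have e1 : ‖(q z / q z₀) ^ ((s : ℝ) : ℂ)‖ = (‖q z‖ / ‖q z₀‖) ^ s := by
        rw [Complex.norm_cpow_real, norm_div]
      have e2 : ‖(((‖q z₀‖ ^ s : ℝ)) : ℂ)‖ = ‖q z₀‖ ^ s := by
        rw [Complex.norm_real, Real.norm_eq_abs, abs_of_pos (Real.rpow_pos_of_pos hq0pos s)]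
      rw [hρ₁ z (hsub₁ hz) hne, hρ₂ z (hsub₂ hz) hne]
      have e3 : ‖q z‖ = ‖w₂ z‖ / ‖w₁ z‖ := by rw [hqz, norm_div]
      have e4 : ‖deriv w₂ z / deriv w₁ z‖ = ‖deriv w₂ z‖ / ‖deriv w₁ z‖ := norm_div _ _
      rw [norm_mul, norm_mul, e1, e3, e2, e4]
      rw [Real.div_rpow (div_nonneg (norm_nonneg _) (norm_nonneg _)) (norm_nonneg _),
        Real.div_rpow (norm_nonneg _) (norm_nonneg _)]
      have h1 : (0:ℝ) < ‖w₁ z‖ ^ s := Real.rpow_pos_of_pos hw1pos s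
      have h2 : (0:ℝ) < ‖q z₀‖ ^ s := Real.rpow_pos_of_pos hq0pos s
      have final : ∀ A B C D E : ℝ, B ≠ 0 → C ≠ 0 → E ≠ 0 →
          A / B / C * (D / E) * C * (B * E) = A * D := by
        intros A B C D E hB hC hE
        field_simp
      exact (final _ _ _ _ _ h1.ne' h2.ne' hder1pos.ne').symm
  · -- flat case
    obtain ⟨r₁, hr₁, ht₁, f₁, hd₁, hf₁⟩ := hflat₁ x hx
    obtain ⟨r₂, hr₂, ht₂, f₂, hd₂, hf₂⟩ := hflat₂ x hx
    refine ⟨min r₁ r₂, lt_min hr₁ hr₂, fun z hz => ht₁ (ball_subset_ball (min_le_left _ _) hz),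
      fun z => f₂ z / f₁ z, ?_, ?_⟩
    · exact DifferentiableOn.div (hd₂.mono (ball_subset_ball (min_le_right _ _)))
        (hd₁.mono (ball_subset_ball (min_le_left _ _)))
        (fun z hz => (hf₁ z (ball_subset_ball (min_le_left _ _) hz)).1)
    · intro z hz _
      obtain ⟨hf₁ne, hρ₁⟩ := hf₁ z (ball_subset_ball (min_le_left _ _) hz)
      obtain ⟨hf₂ne, hρ₂⟩ := hf₂ z (ball_subset_ball (min_le_right _ _) hz)
      rw [hρ₁, hρ₂, norm_div, div_mul_cancel₀]
      exact norm_ne_zero_iff.mpr hf₁ne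

theorem flatCone_ratio_const {M : Type*} [TopologicalSpace M] [ChartedSpace ℂ M] [T2Space M]
    [IsManifold 𝓘(ℂ, ℂ) (⊤ : WithTop ℕ∞) M] [CompactSpace M] [ConnectedSpace M]
    (P : Finset M) (a : M → ℝ) (ρ₁ ρ₂ : M → ℂ → ℝ)
    (hcompat₁ : MetricCompat ρ₁) (hcompat₂ : MetricCompat ρ₂)
    (hflat₁ : FlatAwayFrom ρ₁ (P : Set M)) (hflat₂ : FlatAwayFrom ρ₂ (P : Set M))
    (hcone₁ : ∀ p ∈ P, FiniteConeAt ρ₁ p (a p))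
    (hcone₂ : ∀ p ∈ P, FiniteConeAt ρ₂ p (a p)) :
    ∃ c : ℝ, 0 < c ∧ ∀ m : M, m ∉ P →
      ρ₂ m (chartAt ℂ m m) = c * ρ₁ m (chartAt ℂ m m) := by
  classical
  set u : M → ℝ := fun m => ρ₂ m (chartAt ℂ m m) / ρ₁ m (chartAt ℂ m m) with hu
  have hNB : ∀ m : M, (𝓝[(↑P : Set M)ᶜ] m).NeBot := by
    intro m
    rw [← mem_closure_iff_nhdsWithin_neBot, mem_closure_iff_nhds]
    intro t ht
    obtain ⟨m', hm', hmP⟩ := exists_not_mem_of_mem_nhds P ht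
    exact ⟨m', hm', hmP⟩
  set U : M → ℝ := fun m => limUnder (𝓝[(↑P : Set M)ᶜ] m) u with hUdef
  -- master local structure
  have master : ∀ x : M, ∃ V : Set M, IsOpen V ∧ x ∈ V ∧ ∃ g : M → ℝ,
      (∀ m ∈ V, ContinuousAt g m) ∧ (∀ m ∈ V, U m = g m) ∧
      (∀ m ∈ V, m ∉ (P : Set M) → u m = g m) ∧
      ((∀ m ∈ V, g m ≤ g x) → ∀ m ∈ V, g m = g x) := by
    intro x
    obtain ⟨r, hr, hrt, h, hdiff, hrep⟩ :=
      localRep P a ρ₁ ρ₂ hcompat₁ hflat₁ hflat₂ hcone₁ hcone₂ x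
    set e := chartAt ℂ x with he
    set V : Set M := e.source ∩ e ⁻¹' ball (e x) r with hV
    have hVopen : IsOpen V := e.isOpen_inter_preimage isOpen_ball
    have hxV : x ∈ V := ⟨mem_chart_source ℂ x, mem_ball_self hr⟩
    set g : M → ℝ := fun m => ‖h (e m)‖ with hg
    -- u = g on V off P
    have hug : ∀ m ∈ V, m ∉ (P : Set M) → u m = g m := by
      intro m hm hmP
      have h1 : e.symm (e m) = m := e.left_inv hm.1
      have h2 := hrep (e m) hm.2 (by rwa [h1])
      have h3 : ρ₂ m (chartAt ℂ m m) = g m * ρ₁ m (chartAt ℂ m m) :=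
        transfer hcompat₁ hcompat₂ hm.1 h2
      rw [hu]
      simp only
      rw [h3, mul_div_assoc, div_self (ne_of_gt (rho_pos hflat₁ hmP)), mul_one]
    -- continuity of g on V
    have hgc : ∀ m ∈ V, ContinuousAt g m := by
      intro m hm
      have hh : ContinuousAt h (e m) :=
        (hdiff.continuousOn.continuousAt (isOpen_ball.mem_nhds hm.2))
      exact (hh.comp (e.continuousAt hm.1)).norm
    have hUg : ∀ m ∈ V, U m = g m := by
      intro m hm
      haveI := hNB m
      have htd : Filter.Tendsto u (𝓝[(↑P : Set M)ᶜ] m) (𝓝 (g m)) := by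
        have hgt : Filter.Tendsto g (𝓝[(↑P : Set M)ᶜ] m) (𝓝 (g m)) :=
          ((hgc m hm).tendsto).mono_left nhdsWithin_le_nhds
        refine hgt.congr' ?_
        have hVn : V ∈ 𝓝[(↑P : Set M)ᶜ] m := mem_nhdsWithin_of_mem_nhds (hVopen.mem_nhds hm)
        filter_upwards [hVn, self_mem_nhdsWithin] with m' hm' hm'P
        exact (hug m' hm' hm'P).symm
      exact htd.limUnder_eq
    refine ⟨V, hVopen, hxV, g, hgc, hUg, hug, ?_⟩
    -- local maximum principle
    intro hmax m hm
    have hmaxOn : IsMaxOn (norm ∘ h) (ball (e x) r) (e x) := by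
      intro z hz
      have hzV : e.symm z ∈ V := by
        refine ⟨e.map_target (hrt hz), ?_⟩
        simpa [e.right_inv (hrt hz)] using hz
      have : g (e.symm z) ≤ g x := hmax _ hzV
      simpa [hg, e.right_inv (hrt hz)] using this
    have := Complex.norm_eqOn_of_isPreconnected_of_isMaxOn
      (convex_ball (e x) r).isPreconnected isOpen_ball hdiff (mem_ball_self hr) hmaxOn
    have h1 := this hm.2
    simpa [hg] using h1
  -- global continuity of U
  have hUcont : Continuous U := by
    rw [continuous_iff_continuousAt]
    intro x
    obtain ⟨V, hVopen, hxV, g, hgc, hUg, -, -⟩ := master x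
    refine (hgc x hxV).congr ?_
    filter_upwards [hVopen.mem_nhds hxV] with m hm
    exact (hUg m hm).symm
  -- maximum of U
  obtain ⟨m₀, -, hm₀⟩ := isCompact_univ.exists_isMaxOn Set.univ_nonempty hUcont.continuousOn
  have hm₀' : ∀ m : M, U m ≤ U m₀ := fun m => hm₀ (Set.mem_univ m)
  set S : Set M := {m | U m = U m₀} with hS
  have hSclosed : IsClosed S := isClosed_eq hUcont continuous_const
  have hSopen : IsOpen S := by
    rw [isOpen_iff_mem_nhds]
    intro x hx
    obtain ⟨V, hVopen, hxV, g, hgc, hUg, hug, hmaxp⟩ := master x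
    have hgx : g x = U m₀ := by rw [← hUg x hxV]; exact hx
    have hconst := hmaxp (fun m hm => by rw [hgx, ← hUg m hm]; exact hm₀' m)
    refine Filter.mem_of_superset (hVopen.mem_nhds hxV) ?_
    intro m hm
    show U m = U m₀
    rw [hUg m hm, hconst m hm, hgx]
  have hSuniv : S = Set.univ := by
    rcases isClopen_iff.mp ⟨hSclosed, hSopen⟩ with h | h
    · exact absurd h (Set.nonempty_iff_ne_empty.mp ⟨m₀, rfl⟩)
    · exact h
  -- U = u off P
  have hUu : ∀ m : M, m ∉ (P : Set M) → U m = u m := by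
    intro m hmP
    obtain ⟨V, hVopen, hxV, g, hgc, hUg, hug, -⟩ := master m
    rw [hUg m hxV, hug m hxV hmP]
  -- pick a base point off P
  obtain ⟨m₁, -, hm₁P⟩ := exists_not_mem_of_mem_nhds (m := Classical.arbitrary M) P
    Filter.univ_mem
  have hum₁pos : 0 < u m₁ := div_pos (rho_pos hflat₂ hm₁P) (rho_pos hflat₁ hm₁P)
  refine ⟨u m₁, hum₁pos, ?_⟩
  intro m hmP
  have hmP' : m ∉ (P : Set M) := by simpa using hmP
  have h1 : U m = U m₀ := by
    have : m ∈ S := hSuniv ▸ Set.mem_univ m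
    exact this
  have h2 : U m₁ = U m₀ := by
    have : m₁ ∈ S := hSuniv ▸ Set.mem_univ m₁
    exact this
  have h3 : u m = u m₁ := by
    rw [← hUu m hmP', ← hUu m₁ hm₁P, h1, h2]
  have h4 : ρ₂ m (chartAt ℂ m m) / ρ₁ m (chartAt ℂ m m) = u m₁ := h3
  rw [div_eq_iff (ne_of_gt (rho_pos hflat₁ hmP'))] at h4
  exact h4

end FlatConeAux

/-- Two flat cone metrics on a compact Riemann surface with the same finite cone
points and the same (finite) cone angles differ by a constant positive scalar
factor. -/
theorem stmt_16 {M : Type*} [TopologicalSpace M] [ChartedSpace ℂ M] [T2Space M]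
    [IsManifold 𝓘(ℂ, ℂ) (⊤ : WithTop ℕ∞) M] [CompactSpace M] [ConnectedSpace M]
    (P : Finset M) (a : M → ℝ) (ρ₁ ρ₂ : M → ℂ → ℝ)
    (hcompat₁ : MetricCompat ρ₁) (hcompat₂ : MetricCompat ρ₂)
    (hflat₁ : FlatAwayFrom ρ₁ (P : Set M)) (hflat₂ : FlatAwayFrom ρ₂ (P : Set M))
    (hcone₁ : ∀ p ∈ P, FiniteConeAt ρ₁ p (a p))
    (hcone₂ : ∀ p ∈ P, FiniteConeAt ρ₂ p (a p)) :
    ∃ c : ℝ, 0 < c ∧ ∀ m : M, m ∉ P →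
      ρ₂ m (chartAt ℂ m m) = c * ρ₁ m (chartAt ℂ m m) := by
  exact flatCone_ratio_const P a ρ₁ ρ₂ hcompat₁ hcompat₂ hflat₁ hflat₂ hcone₁ hcone₂
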